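/- Define f : ℤ → ℚ by f(−1) = 1/3, f(0) = 1, f(1) = 4, and f(m) = 4f(m−1) − f(m−2) + 3f(m−3) for all m ≥ 2. Then for every m ≥ 1, f(m) equals the cardinality of the NS-LOCO code NSC(m). -/

import Mathlib

/-- The NS-LOCO code: words of length `m` over the alphabet `{0,1,2,3}`
(position `m-1` most significant) containing no contiguous subword `3 0 3`. -/
def NSC (m : ℕ) : Set (Fin m → Fin 4) :=
  {c | ∀ i : ℕ, ∀ h : i + 2 < m,
      ¬(c ⟨i + 2, h⟩ = 3 ∧ c ⟨i + 1, by omega⟩ = 0 ∧ c ⟨i, by omega⟩ = 3)}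

namespace NSCaux

def hd303 : List (Fin 4) → Bool
  | a :: b :: c :: _ => a == 3 && b == 0 && c == 3
  | _ => false

def good : List (Fin 4) → Bool
  | [] => true
  | a :: l => !hd303 (a :: l) && good l

def s03 : List (Fin 4) → Bool
  | a :: b :: _ => a == 0 && b == 3
  | _ => false

def hd3 : List (Fin 4) → Bool
  | a :: _ => a == 3
  | _ => false

def L : ℕ → Finset (List (Fin 4))
  | 0 => {[]}
  | m+1 => Finset.univ.biUnion fun a : Fin 4 => (L m).image (a :: ·)

def cnt (m : ℕ) (p : List (Fin 4) → Bool) : ℕ := ((L m).filter fun l => p l).card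

lemma cnt_succ (m : ℕ) (p : List (Fin 4) → Bool) :
    cnt (m+1) p = ∑ a : Fin 4, cnt m (fun l => p (a :: l)) := by
  unfold cnt
  rw [show L (m+1) = Finset.univ.biUnion fun a : Fin 4 => (L m).image (a :: ·) from rfl]
  rw [Finset.filter_biUnion]
  rw [Finset.card_biUnion]
  · refine Finset.sum_congr rfl fun a _ => ?_
    rw [Finset.filter_image, Finset.card_image_of_injective _ (fun x y h => by
      simpa using h)]
  · intro a _ b _ hab
    simp only [Finset.disjoint_left, Finset.mem_filter, Finset.mem_image]
    rintro x ⟨⟨l, _, rfl⟩, -⟩ ⟨⟨l', _, h⟩, -⟩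
    exact hab (by injection h with h1 _; exact h1.symm)

lemma cnt_congr {m : ℕ} {p q : List (Fin 4) → Bool} (h : ∀ l, p l = q l) :
    cnt m p = cnt m q := by
  unfold cnt; congr 1; apply Finset.filter_congr; intro l _; rw [h l]

lemma cnt_false (m : ℕ) : cnt m (fun _ => false) = 0 := by
  unfold cnt; simp

lemma cnt_split (m : ℕ) (p q : List (Fin 4) → Bool) :
    cnt m q = cnt m (fun l => p l && q l) + cnt m (fun l => !p l && q l) := by
  unfold cnt
  have h1 : ((L m).filter fun l => (p l && q l) = true) =
      ((L m).filter fun l => q l = true).filter (fun l => p l = true) := by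
    rw [Finset.filter_filter]
    apply Finset.filter_congr; intro l _; simp [and_comm]
  have h2 : ((L m).filter fun l => (!p l && q l) = true) =
      ((L m).filter fun l => q l = true).filter (fun l => ¬ p l = true) := by
    rw [Finset.filter_filter]
    apply Finset.filter_congr; intro l _; simp [and_comm]
  rw [h1, h2, Finset.card_filter_add_card_filter_not]

-- pointwise evaluation lemmas
lemma good_cons (a : Fin 4) (l : List (Fin 4)) :
    good (a :: l) = (!hd303 (a :: l) && good l) := rfl

lemma hd303_cons0 (l : List (Fin 4)) : hd303 ((0 : Fin 4) :: l) = false := by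
  rcases l with _ | ⟨b, _ | ⟨c, t⟩⟩ <;> simp [hd303]
lemma hd303_cons1 (l : List (Fin 4)) : hd303 ((1 : Fin 4) :: l) = false := by
  rcases l with _ | ⟨b, _ | ⟨c, t⟩⟩ <;> simp [hd303]
lemma hd303_cons2 (l : List (Fin 4)) : hd303 ((2 : Fin 4) :: l) = false := by
  rcases l with _ | ⟨b, _ | ⟨c, t⟩⟩ <;> simp [hd303]
lemma hd303_cons3 (l : List (Fin 4)) : hd303 ((3 : Fin 4) :: l) = s03 l := by
  rcases l with _ | ⟨b, _ | ⟨c, t⟩⟩ <;> simp [hd303, s03]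

lemma s03_cons0 (l : List (Fin 4)) : s03 ((0 : Fin 4) :: l) = hd3 l := by
  rcases l with _ | ⟨b, t⟩ <;> simp [s03, hd3]
lemma s03_cons1 (l : List (Fin 4)) : s03 ((1 : Fin 4) :: l) = false := by
  rcases l with _ | ⟨b, t⟩ <;> simp [s03]
lemma s03_cons2 (l : List (Fin 4)) : s03 ((2 : Fin 4) :: l) = false := by
  rcases l with _ | ⟨b, t⟩ <;> simp [s03]
lemma s03_cons3 (l : List (Fin 4)) : s03 ((3 : Fin 4) :: l) = false := by
  rcases l with _ | ⟨b, t⟩ <;> simp [s03]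

lemma hd3_cons (a : Fin 4) (l : List (Fin 4)) : hd3 (a :: l) = (a == 3) := rfl

-- the four sequences
def A (m : ℕ) : ℕ := cnt m good
def Bq (m : ℕ) : ℕ := cnt m (fun l => !s03 l && good l)
def C (m : ℕ) : ℕ := cnt m (fun l => s03 l && good l)
def E (m : ℕ) : ℕ := cnt m (fun l => hd3 l && good l)

lemma hA (m : ℕ) : A (m+1) = 3 * A m + Bq m := by
  unfold A Bq
  rw [cnt_succ, Fin.sum_univ_four]
  have e0 : cnt m (fun l => good ((0:Fin 4) :: l)) = cnt m good :=
    cnt_congr fun l => by rw [good_cons, hd303_cons0]; simp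
  have e1 : cnt m (fun l => good ((1:Fin 4) :: l)) = cnt m good :=
    cnt_congr fun l => by rw [good_cons, hd303_cons1]; simp
  have e2 : cnt m (fun l => good ((2:Fin 4) :: l)) = cnt m good :=
    cnt_congr fun l => by rw [good_cons, hd303_cons2]; simp
  have e3 : cnt m (fun l => good ((3:Fin 4) :: l)) = cnt m (fun l => !s03 l && good l) :=
    cnt_congr fun l => by rw [good_cons, hd303_cons3]
  rw [e0, e1, e2, e3]; ring

lemma hBC (m : ℕ) : A m = C m + Bq m := cnt_split m s03 good

lemma hC (m : ℕ) : C (m+1) = E m := by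
  unfold C E
  rw [cnt_succ, Fin.sum_univ_four]
  have e0 : cnt m (fun l => s03 ((0:Fin 4) :: l) && good ((0:Fin 4) :: l)) =
      cnt m (fun l => hd3 l && good l) :=
    cnt_congr fun l => by rw [s03_cons0, good_cons, hd303_cons0]; simp
  have e1 : cnt m (fun l => s03 ((1:Fin 4) :: l) && good ((1:Fin 4) :: l)) = 0 := by
    rw [cnt_congr (q := fun _ => false) fun l => by rw [s03_cons1]; simp]; exact cnt_false m
  have e2 : cnt m (fun l => s03 ((2:Fin 4) :: l) && good ((2:Fin 4) :: l)) = 0 := by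
    rw [cnt_congr (q := fun _ => false) fun l => by rw [s03_cons2]; simp]; exact cnt_false m
  have e3 : cnt m (fun l => s03 ((3:Fin 4) :: l) && good ((3:Fin 4) :: l)) = 0 := by
    rw [cnt_congr (q := fun _ => false) fun l => by rw [s03_cons3]; simp]; exact cnt_false m
  rw [e0, e1, e2, e3]; omega

lemma hE (m : ℕ) : E (m+1) = Bq m := by
  unfold E Bq
  rw [cnt_succ, Fin.sum_univ_four]
  have e0 : cnt m (fun l => hd3 ((0:Fin 4) :: l) && good ((0:Fin 4) :: l)) = 0 := by
    rw [cnt_congr (q := fun _ => false) fun l => by rw [hd3_cons]; simp]; exact cnt_false m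
  have e1 : cnt m (fun l => hd3 ((1:Fin 4) :: l) && good ((1:Fin 4) :: l)) = 0 := by
    rw [cnt_congr (q := fun _ => false) fun l => by rw [hd3_cons]; simp]; exact cnt_false m
  have e2 : cnt m (fun l => hd3 ((2:Fin 4) :: l) && good ((2:Fin 4) :: l)) = 0 := by
    rw [cnt_congr (q := fun _ => false) fun l => by rw [hd3_cons]; simp]; exact cnt_false m
  have e3 : cnt m (fun l => hd3 ((3:Fin 4) :: l) && good ((3:Fin 4) :: l)) =
      cnt m (fun l => !s03 l && good l) :=
    cnt_congr fun l => by rw [hd3_cons, good_cons, hd303_cons3]; simp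
  rw [e0, e1, e2, e3]; omega

lemma hA0 : A 0 = 1 := by unfold A cnt; simp [L]; rfl
lemma hBq0 : Bq 0 = 1 := by unfold Bq cnt; simp [L]; rfl
lemma hC0 : C 0 = 0 := by unfold C cnt; simp [L]; decide
lemma hE0 : E 0 = 0 := by unfold E cnt; simp [L]; decide

lemma hkey (m : ℕ) : A (m+3) + A (m+1) = 4 * A (m+2) + 3 * A m := by
  have e1 : A (m+3) = 3 * A (m+2) + Bq (m+2) := hA (m+2)
  have e2 := hBC (m+2)
  have e3 : C (m+2) = E (m+1) := hC (m+1)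
  have e4 := hE m
  have e5 := hA m
  omega

lemma hA1 : A 1 = 4 := by simpa [hA0, hBq0] using hA 0
lemma hE1 : E 1 = 1 := by simpa [hBq0] using hE 0
lemma hC1 : C 1 = 0 := by simpa [hE0] using hC 0
lemma hBq1 : Bq 1 = 4 := by have := hBC 1; rw [hA1, hC1] at this; omega
lemma hA2 : A 2 = 16 := by have h := hA 1; rw [hA1, hBq1] at h; exact h
lemma hC2 : C 2 = 1 := by simpa [hE1] using hC 1
lemma hBq2 : Bq 2 = 15 := by have := hBC 2; rw [hA2, hC2] at this; omega
lemma hA3 : A 3 = 63 := by have h := hA 2; rw [hA2, hBq2] at h; exact h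

lemma good_iff : ∀ l : List (Fin 4), good l = true ↔
    ∀ i : ℕ, ∀ h : i + 2 < l.length, ¬(l[i] = 3 ∧ l[i+1] = 0 ∧ l[i+2] = 3) := by
  intro l
  induction l with
  | nil => simp [good]
  | cons a l ih =>
    have hgc : good (a :: l) = (!hd303 (a :: l) && good l) := rfl
    rw [hgc, Bool.and_eq_true, Bool.not_eq_true', ih]
    have hd : hd303 (a :: l) = false ↔
        ¬ ∃ h : 2 < l.length + 1, a = 3 ∧ l[0] = 0 ∧ l[1] = 3 := by
      rcases l with _ | ⟨b, _ | ⟨c, t⟩⟩ <;>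
        simp [hd303, beq_iff_eq] <;> omega
    rw [hd]
    constructor
    · rintro ⟨h0, hrest⟩ i h
      cases i with
      | zero =>
        simp only [List.getElem_cons_zero, List.getElem_cons_succ]
        rintro ⟨h3, h0', h1'⟩
        exact h0 ⟨by simpa using h, h3, h0', h1'⟩
      | succ i =>
        simp only [List.getElem_cons_succ]
        exact hrest i (by simp only [List.length_cons] at h; omega)
    · intro H
      constructor
      · rintro ⟨hlen, h3, h0', h1'⟩
        exact H 0 (by simp only [List.length_cons]; omega) ⟨by simpa using h3, by simpa using h0', by simpa using h1'⟩
      · intro i h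
        have := H (i+1) (by simp only [List.length_cons]; omega)
        simpa using this

lemma nsc_iff_good {m : ℕ} (c : Fin m → Fin 4) :
    c ∈ NSC m ↔ good (List.ofFn c) = true := by
  rw [good_iff]
  constructor
  · intro H i h
    rw [List.length_ofFn] at h
    simp only [List.getElem_ofFn]
    rintro ⟨h3, h0, h1⟩
    exact H i h ⟨h1, h0, h3⟩
  · intro H i h
    rintro ⟨h3, h0, h1⟩
    have := H i (by simpa using h)
    simp only [List.getElem_ofFn] at this
    exact this ⟨h1, h0, h3⟩


lemma mem_L {m : ℕ} {l : List (Fin 4)} : l ∈ L m ↔ l.length = m := by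
  induction m generalizing l with
  | zero => simp [L, List.length_eq_zero_iff]
  | succ m ih =>
    show l ∈ Finset.univ.biUnion (fun a : Fin 4 => (L m).image (a :: ·)) ↔ _
    simp only [Finset.mem_biUnion, Finset.mem_image, Finset.mem_univ, true_and]
    constructor
    · rintro ⟨a, l', hl', rfl⟩; simp [ih.mp hl']
    · intro h
      cases l with
      | nil => simp at h
      | cons a t => exact ⟨a, t, ih.mpr (by simpa using h), rfl⟩

lemma ncard_eq (m : ℕ) : (NSC m).ncard = A m := by
  classical
  have hset : NSC m = ↑(Finset.univ.filter fun c : Fin m → Fin 4 => good (List.ofFn c) = true) := by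
    ext c
    simp [nsc_iff_good c]
  rw [hset, Set.ncard_coe_finset]
  unfold A cnt
  apply Finset.card_bij (fun c _ => List.ofFn c)
  · intro c hc
    simp only [Finset.mem_filter, Finset.mem_univ, true_and] at hc
    simp [Finset.mem_filter, mem_L, hc]
  · intro c1 _ c2 _ h
    exact List.ofFn_injective h
  · intro l hl
    simp only [Finset.mem_filter, mem_L] at hl
    obtain ⟨hlen, hgood⟩ := hl
    subst hlen
    exact ⟨l.get, by simp [List.ofFn_get, hgood], List.ofFn_get l⟩

end NSCaux

theorem stmt14 (f : ℤ → ℚ)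
    (hb1 : f (-1) = 1 / 3) (hb0 : f 0 = 1) (hb : f 1 = 4)
    (hrec : ∀ k : ℤ, 2 ≤ k → f k = 4 * f (k - 1) - f (k - 2) + 3 * f (k - 3)) :
    ∀ m : ℕ, 1 ≤ m → ((NSC m).ncard : ℚ) = f m := by
  have key : ∀ n : ℕ, (NSCaux.A (n+1) : ℚ) = f ((n : ℤ) + 1) := by
    intro n
    induction n using Nat.strong_induction_on with
    | _ n ih =>
      match n with
      | 0 => simpa [NSCaux.hA1] using hb.symm
      | 1 =>
        have h2 := hrec 2 (by norm_num)
        norm_num at h2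
        rw [hb, hb0, hb1] at h2
        norm_num [NSCaux.hA2, h2]
      | 2 =>
        have h2 := hrec 2 (by norm_num)
        have h3 := hrec 3 (by norm_num)
        norm_num at h2 h3
        rw [hb, hb0, hb1] at h2
        rw [h2, hb, hb0] at h3
        norm_num [NSCaux.hA3, h3]
      | (k+3) =>
        have hk := NSCaux.hkey (k+1)
        have i0 : (NSCaux.A (k+1) : ℚ) = f ((k : ℤ) + 1) := ih k (by omega)
        have i1 : (NSCaux.A (k+2) : ℚ) = f ((k : ℤ) + 2) := by
          have h := ih (k+1) (by omega)
          have e : ((k + 1 : ℕ) : ℤ) + 1 = (k : ℤ) + 2 := by push_cast; ring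
          rw [e] at h; exact h
        have i2 : (NSCaux.A (k+3) : ℚ) = f ((k : ℤ) + 3) := by
          have h := ih (k+2) (by omega)
          have e : ((k + 2 : ℕ) : ℤ) + 1 = (k : ℤ) + 3 := by push_cast; ring
          rw [e] at h; exact h
        have hf := hrec ((k : ℤ) + 4) (by omega)
        have hfs : f ((k : ℤ) + 4) = 4 * f ((k:ℤ)+3) - f ((k:ℤ)+2) + 3 * f ((k:ℤ)+1) := by
          rw [hf]
          rw [show (k:ℤ) + 4 - 1 = (k:ℤ) + 3 by ring, show (k:ℤ) + 4 - 2 = (k:ℤ) + 2 by ring,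
            show (k:ℤ) + 4 - 3 = (k:ℤ) + 1 by ring]
        have hcast : (NSCaux.A (k+4) : ℚ) + (NSCaux.A (k+2) : ℚ)
            = 4 * (NSCaux.A (k+3) : ℚ) + 3 * (NSCaux.A (k+1) : ℚ) := by
          exact_mod_cast congrArg (Nat.cast : ℕ → ℚ) hk
        have earg : ((k + 3 : ℕ) : ℤ) + 1 = (k : ℤ) + 4 := by push_cast; ring
        show (NSCaux.A (k+4) : ℚ) = f (((k + 3 : ℕ) : ℤ) + 1)
        rw [earg, hfs, ← i0, ← i1, ← i2]
        linarith [hcast]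
  intro m hm
  obtain ⟨n, rfl⟩ : ∃ n, m = n + 1 := ⟨m - 1, by omega⟩
  rw [NSCaux.ncard_eq, key n]
  norm_cast
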